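/- There exists a constant C > 0 such that for all (c,a) ∈ ℂ², |G(c,a) − log⁺ max{|a|, |c|}| ≤ C. -/

import Mathlib

open Filter

/-- The cubic polynomial `P_{c,a}(z) = z³/3 − (c/2)z² + a³`. -/
noncomputable def P (c a z : ℂ) : ℂ := z ^ 3 / 3 - c / 2 * z ^ 2 + a ^ 3

namespace Stmt1Aux

/-- `m = max(1, |a|, |c|)`. -/
noncomputable def m (c a : ℂ) : ℝ := max 1 (max (‖a‖) (‖c‖))

lemma one_le_m (c a : ℂ) : 1 ≤ m c a := le_max_left _ _
lemma m_pos (c a : ℂ) : 0 < m c a := lt_of_lt_of_le one_pos (one_le_m c a)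
lemma abs_a_le (c a : ℂ) : ‖a‖ ≤ m c a :=
  le_trans (le_max_left _ _) (le_max_right _ _)
lemma abs_c_le (c a : ℂ) : ‖c‖ ≤ m c a :=
  le_trans (le_max_right _ _) (le_max_right _ _)

lemma abs_P_le (c a w : ℂ) : ‖P c a w‖ ≤
    ‖w‖ ^ 3 / 3 + ‖c‖ / 2 * ‖w‖ ^ 2 + ‖a‖ ^ 3 := by
  unfold P
  calc ‖w ^ 3 / 3 - c / 2 * w ^ 2 + a ^ 3‖
      ≤ ‖w ^ 3 / 3 - c / 2 * w ^ 2‖ + ‖a ^ 3‖ :=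
        norm_add_le _ _
    _ ≤ ‖w ^ 3 / 3‖ + ‖c / 2 * w ^ 2‖ + ‖a ^ 3‖ := by
        have := norm_sub_le (w ^ 3 / 3) (c / 2 * w ^ 2)
        linarith
    _ = ‖w‖ ^ 3 / 3 + ‖c‖ / 2 * ‖w‖ ^ 2 + ‖a‖ ^ 3 := by
        simp [map_div₀, map_mul, map_pow]

lemma abs_P_ge (c a w : ℂ) : ‖w‖ ^ 3 / 3 - ‖c‖ / 2 * ‖w‖ ^ 2
    - ‖a‖ ^ 3 ≤ ‖P c a w‖ := by
  unfold P
  have h1 : ‖w ^ 3 / 3‖ - ‖c / 2 * w ^ 2 - a ^ 3‖ ≤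
      ‖w ^ 3 / 3 - (c / 2 * w ^ 2 - a ^ 3)‖ := norm_sub_norm_le _ _
  have h2 : ‖c / 2 * w ^ 2 - a ^ 3‖ ≤
      ‖c / 2 * w ^ 2‖ + ‖a ^ 3‖ := norm_sub_le _ _
  have h3 : w ^ 3 / 3 - (c / 2 * w ^ 2 - a ^ 3) = w ^ 3 / 3 - c / 2 * w ^ 2 + a ^ 3 := by ring
  rw [h3] at h1
  have e1 : ‖w ^ 3 / 3‖ = ‖w‖ ^ 3 / 3 := by simp [map_div₀, map_pow]
  have e2 : ‖c / 2 * w ^ 2‖ = ‖c‖ / 2 * ‖w‖ ^ 2 := by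
    simp [map_div₀, map_mul, map_pow]
  have e3 : ‖a ^ 3‖ = ‖a‖ ^ 3 := norm_pow _ _
  rw [e1] at h1; rw [e2, e3] at h2
  linarith

lemma step_upper (c a w : ℂ) :
    ‖P c a w‖ ≤ (max (‖w‖) (6 * m c a)) ^ 3 := by
  set r := max (‖w‖) (6 * m c a) with hr
  have h := abs_P_le c a w
  have h1 : ‖w‖ ≤ r := le_max_left _ _
  have h2 : 6 * m c a ≤ r := le_max_right _ _
  have hm := one_le_m c a
  have hw := norm_nonneg w
  have hca := abs_c_le c a
  have haa := abs_a_le c a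
  have ha0 := norm_nonneg a
  have hc0 := norm_nonneg c
  have hw3 : ‖w‖ ^ 3 ≤ r ^ 3 := pow_le_pow_left₀ hw h1 3
  have hc2 : ‖c‖ * ‖w‖ ^ 2 ≤ m c a * r ^ 2 :=
    mul_le_mul hca (pow_le_pow_left₀ hw h1 2) (by positivity) (by linarith)
  have ha3 : ‖a‖ ^ 3 ≤ m c a ^ 3 := pow_le_pow_left₀ ha0 haa 3
  nlinarith [sq_nonneg r, sq_nonneg (m c a), mul_le_mul_of_nonneg_right h2 (sq_nonneg r),
    mul_le_mul_of_nonneg_right h2 (sq_nonneg (m c a)), mul_pos (m_pos c a) (m_pos c a)]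

lemma step_lower (c a : ℂ) {w : ℂ} (h : 6 * m c a ≤ ‖w‖) :
    ‖w‖ ^ 3 / 6 ≤ ‖P c a w‖ := by
  have hg := abs_P_ge c a w
  have hm := one_le_m c a
  have hca := abs_c_le c a
  have haa := abs_a_le c a
  have ha0 := norm_nonneg a
  have hc0 := norm_nonneg c
  have hw : (0:ℝ) ≤ ‖w‖ := norm_nonneg w
  have ha3 : ‖a‖ ^ 3 ≤ m c a ^ 3 := pow_le_pow_left₀ ha0 haa 3
  have hc2 : ‖c‖ * ‖w‖ ^ 2 ≤ m c a * ‖w‖ ^ 2 :=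
    mul_le_mul_of_nonneg_right hca (sq_nonneg _)
  nlinarith [mul_le_mul_of_nonneg_right h (sq_nonneg (‖w‖)),
    mul_le_mul_of_nonneg_right h (sq_nonneg (m c a)), mul_pos (m_pos c a) (m_pos c a),
    mul_le_mul_of_nonneg_left h (le_of_lt (m_pos c a))]

lemma step_stay (c a : ℂ) {w : ℂ} (h : 6 * m c a ≤ ‖w‖) :
    6 * m c a ≤ ‖P c a w‖ := by
  have h1 := step_lower c a h
  have hm := one_le_m c a
  nlinarith [mul_le_mul_of_nonneg_right h (sq_nonneg (‖w‖)),
    mul_le_mul_of_nonneg_left h (le_of_lt (m_pos c a)),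
    mul_le_mul_of_nonneg_right h (mul_nonneg (le_of_lt (m_pos c a)) (le_of_lt (m_pos c a)))]

lemma iter_stay (c a : ℂ) {w : ℂ} (h : 6 * m c a ≤ ‖w‖) (k : ℕ) :
    6 * m c a ≤ ‖(P c a)^[k] w‖ := by
  induction k with
  | zero => simpa using h
  | succ k ih =>
      rw [Function.iterate_succ_apply']
      exact step_stay c a ih

lemma six_m_ge (c a : ℂ) : (6:ℝ) ≤ 6 * m c a := by
  have := one_le_m c a; linarith

lemma iter_le (c a : ℂ) {z : ℂ} (hz : ‖z‖ ≤ 6 * m c a) (n : ℕ) :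
    max 1 (‖(P c a)^[n] z‖) ≤ (6 * m c a) ^ 3 ^ n := by
  have hm6 : (1:ℝ) ≤ 6 * m c a := le_trans (by norm_num) (six_m_ge c a)
  induction n with
  | zero => simp [max_le_iff, hz, hm6]
  | succ n ih =>
      rw [Function.iterate_succ_apply']
      have h1 : ‖(P c a)^[n] z‖ ≤ (6 * m c a) ^ 3 ^ n :=
        le_trans (le_max_right _ _) ih
      have hb : max (‖(P c a)^[n] z‖) (6 * m c a) ≤ (6 * m c a) ^ 3 ^ n := by
        refine max_le h1 (le_self_pow₀ hm6 (by positivity))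
      have := step_upper c a ((P c a)^[n] z)
      have h2 : ‖P c a ((P c a)^[n] z)‖ ≤ ((6 * m c a) ^ 3 ^ n) ^ 3 :=
        le_trans this (pow_le_pow_left₀ (le_max_of_le_right (by linarith)) hb 3)
      rw [← pow_mul, ← pow_succ] at h2
      refine max_le (one_le_pow₀ hm6) h2

lemma iter_lower (c a : ℂ) {w : ℂ} (h : 6 * m c a ≤ ‖w‖) (k : ℕ) :
    (‖w‖ ^ 2 / 6) ^ 3 ^ k ≤ ‖(P c a)^[k] w‖ ^ 2 / 6 := by
  induction k with
  | zero => simp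
  | succ k ih =>
      rw [Function.iterate_succ_apply']
      set v := (P c a)^[k] w with hv
      have hstay : 6 * m c a ≤ ‖v‖ := iter_stay c a h k
      have hlow : ‖v‖ ^ 3 / 6 ≤ ‖P c a v‖ := step_lower c a hstay
      have hv0 : (0:ℝ) ≤ ‖v‖ := norm_nonneg v
      have h2 : (‖v‖ ^ 2 / 6) ^ 3 ≤ ‖P c a v‖ ^ 2 / 6 := by
        have h3 : (‖v‖ ^ 3 / 6) ^ 2 ≤ ‖P c a v‖ ^ 2 :=
          pow_le_pow_left₀ (by positivity) hlow 2
        nlinarith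
      calc (‖w‖ ^ 2 / 6) ^ 3 ^ (k + 1)
          = ((‖w‖ ^ 2 / 6) ^ 3 ^ k) ^ 3 := by rw [show (3:ℕ)^(k+1) = 3^k*3 from pow_succ 3 k, pow_mul]
        _ ≤ (‖v‖ ^ 2 / 6) ^ 3 := by
            refine pow_le_pow_left₀ (by positivity) ih 3
        _ ≤ ‖P c a v‖ ^ 2 / 6 := h2

lemma main (c a z : ℂ) (hz : ‖z‖ ≤ 6 * m c a) :
    ∃ g : ℝ, Tendsto (fun n : ℕ =>
        Real.log (max 1 (‖(P c a)^[n] z‖)) / 3 ^ n) atTop (nhds g) ∧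
      0 ≤ g ∧ g ≤ Real.log (6 * m c a) ∧
      (6 * m c a ≤ ‖P c a z‖ →
        (2 * Real.log (‖P c a z‖) - Real.log 6) / 6 ≤ g) := by
  set f : ℕ → ℝ := fun n => Real.log (max 1 (‖(P c a)^[n] z‖)) / 3 ^ n with hf
  have hm6 : (1:ℝ) ≤ 6 * m c a := le_trans (by norm_num) (six_m_ge c a)
  have hfnn : ∀ n, 0 ≤ f n := fun n =>
    div_nonneg (Real.log_nonneg (le_max_left _ _)) (by positivity)
  have hfub : ∀ n, f n ≤ Real.log (6 * m c a) := by
    intro n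
    have h1 : max 1 (‖(P c a)^[n] z‖) ≤ (6 * m c a) ^ 3 ^ n := iter_le c a hz n
    have h2 : Real.log (max 1 (‖(P c a)^[n] z‖)) ≤ (3:ℝ) ^ n * Real.log (6 * m c a) := by
      have := Real.log_le_log (by positivity) h1
      rwa [Real.log_pow, Nat.cast_pow, Nat.cast_ofNat] at this
    calc f n ≤ ((3:ℝ) ^ n * Real.log (6 * m c a)) / 3 ^ n :=
          div_le_div_of_nonneg_right h2 (by positivity) |>.trans_eq rfl
      _ = Real.log (6 * m c a) := by field_simp
  by_cases hesc : ∃ n0 : ℕ, 6 * m c a ≤ ‖(P c a)^[n0] z‖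
  · obtain ⟨n0, hn0⟩ := hesc
    set w := (P c a)^[n0] z with hw
    set t : ℕ → ℝ := fun k =>
      Real.log (max 1 (‖(P c a)^[k] w‖)) / 3 ^ k with ht
    have hstay : ∀ k, 6 * m c a ≤ ‖(P c a)^[k] w‖ := iter_stay c a hn0
    have hmax : ∀ k, max 1 (‖(P c a)^[k] w‖) = ‖(P c a)^[k] w‖ :=
      fun k => max_eq_right (le_trans hm6 (hstay k))
    have hanti : Antitone t := by
      apply antitone_nat_of_succ_le
      intro k
      have h1 : ‖P c a ((P c a)^[k] w)‖ ≤ ‖(P c a)^[k] w‖ ^ 3 := by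
        have := step_upper c a ((P c a)^[k] w)
        rwa [max_eq_left (hstay k)] at this
      have hpos : (0:ℝ) < ‖(P c a)^[k] w‖ := lt_of_lt_of_le (by linarith) (hstay k)
      have h2 : Real.log (max 1 (‖(P c a)^[k+1] w‖)) ≤
          3 * Real.log (max 1 (‖(P c a)^[k] w‖)) := by
        rw [hmax, hmax, Function.iterate_succ_apply']
        calc Real.log (‖P c a ((P c a)^[k] w)‖)
            ≤ Real.log (‖(P c a)^[k] w‖ ^ 3) := by
              apply Real.log_le_log _ h1
              exact lt_of_lt_of_le (by linarith) (step_stay c a (hstay k))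
          _ = 3 * Real.log (‖(P c a)^[k] w‖) := by
              rw [Real.log_pow]; norm_num
      show Real.log (max 1 (‖(P c a)^[k+1] w‖)) / 3 ^ (k+1) ≤
        Real.log (max 1 (‖(P c a)^[k] w‖)) / 3 ^ k
      rw [pow_succ]
      calc Real.log (max 1 (‖(P c a)^[k+1] w‖)) / (3 ^ k * 3)
          ≤ (3 * Real.log (max 1 (‖(P c a)^[k] w‖))) / (3 ^ k * 3) :=
            div_le_div_of_nonneg_right h2 (by positivity) |>.trans_eq rfl
        _ = Real.log (max 1 (‖(P c a)^[k] w‖)) / 3 ^ k := by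
            field_simp
    have hbdd : BddBelow (Set.range t) := by
      refine ⟨0, ?_⟩
      rintro x ⟨k, rfl⟩
      exact div_nonneg (Real.log_nonneg (le_max_left _ _)) (by positivity)
    have htend : Tendsto t atTop (nhds (⨅ k, t k)) := tendsto_atTop_ciInf hanti hbdd
    set L := ⨅ k, t k with hL
    refine ⟨L / 3 ^ n0, ?_, ?_, ?_, ?_⟩
    · rw [← tendsto_add_atTop_iff_nat n0]
      have heq : ∀ k : ℕ, f (k + n0) = t k / 3 ^ n0 := by
        intro k
        show Real.log (max 1 (‖(P c a)^[k + n0] z‖)) / 3 ^ (k + n0)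
          = Real.log (max 1 (‖(P c a)^[k] w‖)) / 3 ^ k / 3 ^ n0
        rw [Function.iterate_add_apply, ← hw, pow_add, div_div]
      simp only [heq]
      exact htend.div_const _
    · have : (0:ℝ) ≤ L := le_ciInf fun k =>
        div_nonneg (Real.log_nonneg (le_max_left _ _)) (by positivity)
      positivity
    · have htendf : Tendsto f atTop (nhds (L / 3 ^ n0)) := by
        rw [← tendsto_add_atTop_iff_nat n0]
        have heq : ∀ k : ℕ, f (k + n0) = t k / 3 ^ n0 := by
          intro k
          show Real.log (max 1 (‖(P c a)^[k + n0] z‖)) / 3 ^ (k + n0)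
            = Real.log (max 1 (‖(P c a)^[k] w‖)) / 3 ^ k / 3 ^ n0
          rw [Function.iterate_add_apply, ← hw, pow_add, div_div]
        simp only [heq]
        exact htend.div_const _
      exact le_of_tendsto' htendf hfub
    · intro h1
      have htendf : Tendsto f atTop (nhds (L / 3 ^ n0)) := by
        rw [← tendsto_add_atTop_iff_nat n0]
        have heq : ∀ k : ℕ, f (k + n0) = t k / 3 ^ n0 := by
          intro k
          show Real.log (max 1 (‖(P c a)^[k + n0] z‖)) / 3 ^ (k + n0)
            = Real.log (max 1 (‖(P c a)^[k] w‖)) / 3 ^ k / 3 ^ n0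
          rw [Function.iterate_add_apply, ← hw, pow_add, div_div]
        simp only [heq]
        exact htend.div_const _
      refine ge_of_tendsto htendf ?_
      rw [eventually_atTop]
      refine ⟨1, fun n hn => ?_⟩
      obtain ⟨k, rfl⟩ := Nat.exists_eq_add_of_le hn
      set w1 := P c a z with hw1
      have hw1e : (P c a)^[1] z = w1 := by simp [hw1]
      have hlow := iter_lower c a h1 k
      have hstay1 : 6 * m c a ≤ ‖(P c a)^[k] w1‖ := iter_stay c a h1 k
      have hp6 : (6:ℝ) ≤ ‖(P c a)^[k] w1‖ := le_trans (six_m_ge c a) hstay1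
      have hb6 : (6:ℝ) ≤ ‖w1‖ := le_trans (six_m_ge c a) h1
      have hbase : (1:ℝ) ≤ ‖w1‖ ^ 2 / 6 := by nlinarith
      have hlog : (3:ℝ) ^ k * Real.log (‖w1‖ ^ 2 / 6) ≤
          Real.log (‖(P c a)^[k] w1‖ ^ 2 / 6) := by
        have := Real.log_le_log (by positivity) hlow
        rwa [Real.log_pow, Nat.cast_pow, Nat.cast_ofNat] at this
      have hlog2 : Real.log (‖w1‖ ^ 2 / 6) = 2 * Real.log (‖w1‖) - Real.log 6 := by
        rw [Real.log_div (by positivity) (by norm_num), Real.log_pow]; norm_num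
      have hlog3 : Real.log (‖(P c a)^[k] w1‖ ^ 2 / 6) =
          2 * Real.log (‖(P c a)^[k] w1‖) - Real.log 6 := by
        rw [Real.log_div (by positivity) (by norm_num), Real.log_pow]; norm_num
      have hlog6 : (0:ℝ) ≤ Real.log 6 := Real.log_nonneg (by norm_num)
      have hkey : (3:ℝ) ^ k * (2 * Real.log (‖w1‖) - Real.log 6) / 2 ≤
          Real.log (‖(P c a)^[k] w1‖) := by
        rw [hlog2] at hlog
        rw [hlog3] at hlog
        nlinarith [pow_pos (show (0:ℝ) < 3 by norm_num) k]
      have hfeq : f (1 + k) = Real.log (‖(P c a)^[k] w1‖) / 3 ^ (1 + k) := by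
        show Real.log (max 1 (‖(P c a)^[1 + k] z‖)) / 3 ^ (1 + k) = _
        rw [add_comm 1 k, Function.iterate_add_apply, hw1e,
          max_eq_right (le_trans hm6 hstay1)]
      rw [hfeq]
      rw [div_le_div_iff₀ (by norm_num) (by positivity)]
      have h3p : (3:ℝ) ^ (1 + k) = 3 * 3 ^ k := by rw [pow_add, pow_one]
      rw [h3p]
      nlinarith [hkey, pow_pos (show (0:ℝ) < 3 by norm_num) k]
  · push_neg at hesc
    refine ⟨0, ?_, le_refl 0, Real.log_nonneg hm6, fun h => absurd h (not_le.2 ?_)⟩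
    · have hub2 : ∀ n, f n ≤ Real.log (6 * m c a) * (1/3) ^ n := by
        intro n
        have h1 : max 1 (‖(P c a)^[n] z‖) ≤ 6 * m c a :=
          max_le hm6 (le_of_lt (hesc n))
        have h2 : Real.log (max 1 (‖(P c a)^[n] z‖)) ≤ Real.log (6 * m c a) :=
          Real.log_le_log (by positivity) h1
        show Real.log (max 1 (‖(P c a)^[n] z‖)) / 3 ^ n ≤ _
        rw [one_div, inv_pow, ← div_eq_mul_inv]
        exact div_le_div_of_nonneg_right h2 (by positivity)
      have hlim : Tendsto (fun n : ℕ => Real.log (6 * m c a) * (1/3) ^ n) atTop (nhds 0) := by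
        have := (tendsto_pow_atTop_nhds_zero_of_lt_one (show (0:ℝ) ≤ 1/3 by norm_num)
          (show (1:ℝ)/3 < 1 by norm_num)).const_mul (Real.log (6 * m c a))
        simpa using this
      exact squeeze_zero hfnn hub2 hlim
    · have := hesc 1
      simpa using this

end Stmt1Aux

/-- There is a constant `C > 0` such that for all `(c,a) ∈ ℂ²`,
`|G(c,a) − log⁺ max{|a|,|c|}| ≤ C`, where `G(c,a) = max{g₀(c,a), g₁(c,a)}` and
`g₀(c,a)`, `g₁(c,a)` are the limits of `3⁻ⁿ log⁺ |P_{c,a}ⁿ(cᵢ)|` at the critical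
points `c₀ = 0` and `c₁ = c` (the limits exist). -/
theorem stmt1 :
    ∃ C : ℝ, 0 < C ∧ ∀ c a : ℂ, ∃ g0 g1 : ℝ,
      Tendsto (fun n : ℕ =>
          Real.log (max 1 (‖(P c a)^[n] 0‖)) / 3 ^ n) atTop (nhds g0) ∧
      Tendsto (fun n : ℕ =>
          Real.log (max 1 (‖(P c a)^[n] c‖)) / 3 ^ n) atTop (nhds g1) ∧
      |max g0 g1 - Real.log (max 1 (max (‖a‖) (‖c‖)))| ≤ C := by
  refine ⟨Real.log 12, Real.log_pos (by norm_num), fun c a => ?_⟩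
  have hm := Stmt1Aux.one_le_m c a
  have hmpos := Stmt1Aux.m_pos c a
  obtain ⟨g0, h0t, h0nn, h0ub, h0low⟩ := Stmt1Aux.main c a 0
    (by rw [norm_zero]; linarith)
  obtain ⟨g1, h1t, h1nn, h1ub, h1low⟩ := Stmt1Aux.main c a c
    (by have := Stmt1Aux.abs_c_le c a; linarith)
  refine ⟨g0, g1, h0t, h1t, ?_⟩
  have hlogm : Real.log (max 1 (max (‖a‖) (‖c‖)))
      = Real.log (Stmt1Aux.m c a) := rfl
  rw [hlogm]
  have hlog6m : Real.log (6 * Stmt1Aux.m c a) = Real.log 6 + Real.log (Stmt1Aux.m c a) :=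
    Real.log_mul (by norm_num) (by positivity)
  have h6_12 : Real.log 6 ≤ Real.log 12 := Real.log_le_log (by norm_num) (by norm_num)
  have hlog12 : (0:ℝ) ≤ Real.log 12 := Real.log_nonneg (by norm_num)
  rw [abs_le]
  constructor
  · -- lower bound
    rw [neg_le, neg_sub]
    by_cases hm12 : Stmt1Aux.m c a ≤ 12
    · have h1 : Real.log (Stmt1Aux.m c a) ≤ Real.log 12 := Real.log_le_log hmpos hm12
      have h2 : (0:ℝ) ≤ max g0 g1 := le_max_of_le_left h0nn
      linarith
    · push_neg at hm12
      set mm := Stmt1Aux.m c a with hmm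
      have hM : max (‖a‖) (‖c‖) = mm := by
        have h1 : (1:ℝ) ≤ max (‖a‖) (‖c‖) := by
          by_contra hcon
          push_neg at hcon
          have : mm = 1 := max_eq_left (le_of_lt hcon)
          linarith
        exact (max_eq_right h1).symm
      have hP0 : ‖P c a 0‖ = ‖a‖ ^ 3 := by
        have : P c a 0 = a ^ 3 := by simp [P]
        rw [this, norm_pow]
      have hPc : P c a c = a ^ 3 - c ^ 3 / 6 := by unfold P; ring
      -- dichotomy
      have hdich : mm ^ 3 / 12 ≤ ‖P c a 0‖ ∨
          mm ^ 3 / 12 ≤ ‖P c a c‖ := by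
        by_cases hA : mm ^ 3 / 12 ≤ ‖a‖ ^ 3
        · left; rw [hP0]; exact hA
        · right
          push_neg at hA
          have ha0 := norm_nonneg a
          have hac : ‖a‖ < mm := by
            by_contra hcon
            push_neg at hcon
            have h3 : mm ^ 3 ≤ ‖a‖ ^ 3 :=
              pow_le_pow_left₀ (by positivity) hcon 3
            linarith [pow_pos hmpos 3]
          have hcm : ‖c‖ = mm := by
            rcases max_cases (‖a‖) (‖c‖) with ⟨h, _⟩ | ⟨h, _⟩
            · rw [h] at hM; linarith
            · rw [h] at hM; exact hM
          have htri : ‖c ^ 3 / 6‖ - ‖a ^ 3‖ ≤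
              ‖c ^ 3 / 6 - a ^ 3‖ := norm_sub_norm_le _ _
          have heq : ‖P c a c‖ = ‖c ^ 3 / 6 - a ^ 3‖ := by
            rw [hPc, ← norm_neg]
            ring_nf
          have e1 : ‖c ^ 3 / 6‖ = mm ^ 3 / 6 := by
            rw [norm_div, norm_pow, hcm]; norm_num
          have e2 : ‖a ^ 3‖ = ‖a‖ ^ 3 := norm_pow _ _
          rw [heq]
          rw [e1, e2] at htri
          linarith
      have hbig : 6 * mm ≤ mm ^ 3 / 12 := by
        nlinarith [mul_lt_mul_of_pos_left hm12 hmpos,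
          mul_lt_mul_of_pos_left hm12 (mul_pos hmpos hmpos)]
      rcases hdich with h | h
      · have h6m : 6 * mm ≤ ‖P c a 0‖ := le_trans hbig h
        have hg := h0low h6m
        have hlogP : 3 * Real.log mm - Real.log 12 ≤ Real.log (‖P c a 0‖) := by
          have := Real.log_le_log (by positivity) h
          rwa [Real.log_div (by positivity) (by norm_num), Real.log_pow,
            Nat.cast_ofNat] at this
        have : Real.log mm - Real.log 12 ≤ g0 := by linarith
        have h2 : g0 ≤ max g0 g1 := le_max_left _ _
        linarith
      · have h6m : 6 * mm ≤ ‖P c a c‖ := le_trans hbig h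
        have hg := h1low h6m
        have hlogP : 3 * Real.log mm - Real.log 12 ≤ Real.log (‖P c a c‖) := by
          have := Real.log_le_log (by positivity) h
          rwa [Real.log_div (by positivity) (by norm_num), Real.log_pow,
            Nat.cast_ofNat] at this
        have : Real.log mm - Real.log 12 ≤ g1 := by linarith
        have h2 : g1 ≤ max g0 g1 := le_max_right _ _
        linarith
  · -- upper bound
    have h1 : max g0 g1 ≤ Real.log (6 * Stmt1Aux.m c a) := max_le h0ub h1ub
    linarith
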